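/- (Lovász form of Kruskal–Katona) Let G be a (d+1)-uniform family of subsets of [n] and let α ≥ d+1 be the real number with |G| = C(α, d+1) (generalized binomial coefficient). Then |∂_d G| ≥ C(α, d) = |G| · (d+1)/(α − d). -/

import Mathlib

open Finset
open scoped FinsetFamily

/-- generalized binomial coefficient C(α, k) for real α -/
noncomputable def gchoose (α : ℝ) (k : ℕ) : ℝ :=
  (∏ i ∈ Finset.range k, (α - i)) / k.factorial

lemma factor_nonneg {α : ℝ} {k : ℕ} (h : (k : ℝ) - 1 ≤ α) {i : ℕ} (hi : i ∈ Finset.range k) :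
    0 ≤ α - i := by
  rw [Finset.mem_range] at hi
  have : (i : ℝ) + 1 ≤ (k : ℝ) := by exact_mod_cast hi
  linarith

lemma gchoose_nonneg {α : ℝ} {k : ℕ} (h : (k : ℝ) - 1 ≤ α) : 0 ≤ gchoose α k :=
  div_nonneg (Finset.prod_nonneg fun _ hi => factor_nonneg h hi) (by positivity)

lemma gchoose_le_gchoose {α β : ℝ} {k : ℕ} (h1 : (k : ℝ) - 1 ≤ α) (h2 : α ≤ β) :
    gchoose α k ≤ gchoose β k := by
  apply div_le_div_of_nonneg_right ?_ (by positivity)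
  · exact Finset.prod_le_prod (fun _ hi => factor_nonneg h1 hi) (fun i _ => by linarith)

lemma gchoose_lt_gchoose {α β : ℝ} {k : ℕ} (h1 : (k : ℝ) - 1 < α) (h2 : α < β) (hk : k ≠ 0) :
    gchoose α k < gchoose β k := by
  apply div_lt_div_of_pos_right ?_ (by positivity)
  have hne : (Finset.range k).Nonempty := by
    exact Finset.nonempty_range_iff.mpr hk
  apply Finset.prod_lt_prod_of_nonempty ?_ (fun i _ => by linarith) hne
  intro i hi
  rw [Finset.mem_range] at hi
  have : (i : ℝ) + 1 ≤ (k : ℝ) := by exact_mod_cast hi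
  linarith

lemma gchoose_zero (α : ℝ) : gchoose α 0 = 1 := by simp [gchoose]

lemma gchoose_succ (α : ℝ) (k : ℕ) :
    gchoose α (k + 1) = gchoose α k * (α - k) / (k + 1) := by
  rw [gchoose, gchoose, Finset.prod_range_succ, Nat.factorial_succ]
  have h1 : (k.factorial : ℝ) ≠ 0 := by positivity
  have h2 : ((k : ℝ) + 1) ≠ 0 := by positivity
  push_cast
  rw [div_mul_eq_mul_div, div_div, div_eq_div_iff (by positivity) (by positivity)]
  ring

lemma prod_self (k : ℕ) : (∏ i ∈ Finset.range k, ((k : ℝ) - i)) = k.factorial := by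
  induction k with
  | zero => simp
  | succ k ih =>
    rw [Finset.prod_range_succ']
    push_cast
    have : (∏ i ∈ Finset.range k, ((k:ℝ) + 1 - (i + 1))) = k.factorial := by
      rw [← ih]; apply Finset.prod_congr rfl; intro i _; ring
    rw [this, Nat.factorial_succ]
    push_cast
    ring

lemma gchoose_self (k : ℕ) : gchoose (k : ℝ) k = 1 := by
  rw [gchoose, prod_self]
  have : (k.factorial : ℝ) ≠ 0 := by positivity
  field_simp

lemma one_le_gchoose {α : ℝ} (k : ℕ) (h : (k : ℝ) ≤ α) : 1 ≤ gchoose α k := by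
  have := gchoose_le_gchoose (α := (k : ℝ)) (β := α) (k := k) (by linarith) h
  rwa [gchoose_self] at this

lemma gchoose_succ_self (k : ℕ) : gchoose ((k : ℝ) + 1) k = (k : ℝ) + 1 := by
  have h := gchoose_succ ((k : ℝ) + 1) k
  have h2 : gchoose ((k : ℝ) + 1) (k + 1) = 1 := by
    have := gchoose_self (k + 1); push_cast at this; exact this
  rw [h2] at h
  have h3 : ((k : ℝ) + 1) - k = 1 := by ring
  rw [h3, mul_one] at h
  have hk : (k : ℝ) + 1 ≠ 0 := by positivity
  field_simp at h
  linarith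

lemma gchoose_pascal (α : ℝ) (k : ℕ) :
    gchoose α (k + 1) = gchoose (α - 1) k + gchoose (α - 1) (k + 1) := by
  have key : (∏ i ∈ Finset.range (k+1), (α - i)) = α * ∏ i ∈ Finset.range k, (α - 1 - i) := by
    rw [Finset.prod_range_succ']
    simp only [Nat.cast_zero, sub_zero]
    rw [mul_comm]
    congr 1
    apply Finset.prod_congr rfl
    intro i _
    push_cast
    ring
  rw [gchoose, gchoose, gchoose, key, Finset.prod_range_succ, Nat.factorial_succ]
  have h1 : (k.factorial : ℝ) ≠ 0 := by positivity
  have h2 : ((k:ℝ) + 1) ≠ 0 := by positivity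
  push_cast
  field_simp
  ring

lemma exists_lower_subset {β : Type*} [LinearOrder β] (s : Finset β) :
    ∀ N : ℕ, N ≤ s.card → ∃ t, t ⊆ s ∧ t.card = N ∧ ∀ a ∈ t, ∀ b ∈ s, b ≤ a → b ∈ t := by
  intro N
  induction N with
  | zero => intro _; exact ⟨∅, empty_subset _, card_empty, by simp⟩
  | succ N ih =>
    intro hN
    obtain ⟨t, hts, htc, hlow⟩ := ih (Nat.le_of_succ_le hN)
    have hne : (s \ t).Nonempty := by
      rw [← Finset.card_pos, card_sdiff_of_subset hts, htc]
      omega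
    set m := (s \ t).min' hne with hm
    have hmmem : m ∈ s \ t := (s \ t).min'_mem hne
    rw [mem_sdiff] at hmmem
    refine ⟨insert m t, ?_, ?_, ?_⟩
    · exact insert_subset hmmem.1 hts
    · rw [card_insert_of_notMem hmmem.2, htc]
    · intro a ha b hb hba
      rcases mem_insert.mp ha with rfl | hat
      · by_cases hbt : b ∈ t
        · exact mem_insert_of_mem hbt
        · have : m ≤ b := min'_le _ _ (mem_sdiff.mpr ⟨hb, hbt⟩)
          have : b = m := le_antisymm hba this
          simp [this]
      · exact mem_insert_of_mem (hlow a hat b hb hba)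

lemma exists_initSeg (n r N : ℕ)
    (hN : N ≤ ((Finset.univ : Finset (Fin n)).powersetCard r).card) :
    ∃ 𝒞 : Finset (Finset (Fin n)), Finset.Colex.IsInitSeg 𝒞 r ∧ 𝒞.card = N := by
  classical
  have hinj : Function.Injective (toColex (α := Finset (Fin n))) := fun a b h => by
    simpa using h
  set s : Finset (Colex (Finset (Fin n))) :=
    ((Finset.univ : Finset (Fin n)).powersetCard r).image toColex with hs
  have hscard : s.card = ((Finset.univ : Finset (Fin n)).powersetCard r).card :=
    card_image_of_injective _ hinj
  obtain ⟨t, hts, htc, hlow⟩ := exists_lower_subset s N (by rw [hscard]; exact hN)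
  have hinj2 : Function.Injective (ofColex (α := Finset (Fin n))) := fun a b h => by
    cases a; cases b; simpa using h
  refine ⟨t.image ofColex, ⟨?_, ?_⟩, by rw [card_image_of_injective _ hinj2, htc]⟩
  · intro A hA
    simp only [coe_image, Set.mem_image, mem_coe] at hA
    obtain ⟨c, hct, rfl⟩ := hA
    have := hts hct
    rw [hs, mem_image] at this
    obtain ⟨B, hB, rfl⟩ := this
    rw [Finset.mem_powersetCard_univ] at hB
    simpa using hB
  · intro A B hA hB
    rw [mem_image] at hA
    obtain ⟨c, hct, rfl⟩ := hA
    have hBs : toColex B ∈ s := by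
      rw [hs, mem_image]
      exact ⟨B, Finset.mem_powersetCard_univ.mpr hB.2, rfl⟩
    have : toColex B ∈ t := by
      apply hlow c hct _ hBs
      simpa using hB.1.le
    rw [mem_image]
    exact ⟨_, this, by simp⟩


lemma initSeg_shift {n : ℕ} [NeZero n] {r : ℕ} {𝒞 : Finset (Finset (Fin n))}
    (hinit : Finset.Colex.IsInitSeg 𝒞 r) :
    ∀ A ∈ 𝒞, (0 : Fin n) ∉ A → ∀ j ∈ A, insert 0 (A.erase j) ∈ 𝒞 := by
  intro A hA h0 j hj
  have hj0 : j ≠ 0 := fun h => h0 (h ▸ hj)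
  have hlt : (0 : Fin n) < j := (Fin.pos_iff_ne_zero' j).mpr hj0
  have h0e : (0 : Fin n) ∉ A.erase j := fun h => h0 (mem_of_mem_erase h)
  have hcolex : toColex (insert (0 : Fin n) (A.erase j)) < toColex A := by
    conv_rhs => rw [← insert_erase hj]
    exact (Finset.Colex.insert_lt_insert h0e (notMem_erase j A)).mpr hlt
  apply hinit.2 hA
  refine ⟨hcolex, ?_⟩
  rw [card_insert_of_notMem h0e, card_erase_of_mem hj, hinit.1 hA]
  have : A.card ≠ 0 := by
    intro h
    rw [card_eq_zero] at h
    subst h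
    exact notMem_empty j hj
  rw [hinit.1 hA] at this
  omega

set_option maxHeartbeats 1000000 in
lemma lovasz_core (k : ℕ) : ∀ (N n : ℕ) (𝒢 : Finset (Finset (Fin n))),
    𝒢.card ≤ N → (∀ G ∈ 𝒢, G.card = k + 1) → ∀ α : ℝ, (k : ℝ) + 1 ≤ α →
    gchoose α (k + 1) ≤ (𝒢.card : ℝ) → gchoose α k ≤ ((∂ 𝒢).card : ℝ) := by
  induction k with
  | zero =>
    intro N n 𝒢 _ hunif α hα hcard
    rw [gchoose_zero]
    have hone : (1 : ℝ) ≤ gchoose α 1 := one_le_gchoose 1 (by push_cast; push_cast at hα; linarith)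
    have hne : 𝒢.Nonempty := by
      rw [← card_pos]
      by_contra h
      push_neg at h
      have : 𝒢.card = 0 := by omega
      rw [this] at hcard
      push_cast at hcard
      linarith
    obtain ⟨G, hG⟩ := hne
    obtain ⟨a, rfl⟩ := card_eq_one.mp (hunif G hG)
    have hmem : (∅ : Finset (Fin n)) ∈ ∂ 𝒢 :=
      mem_shadow_iff.mpr ⟨{a}, hG, a, mem_singleton_self a, by simp⟩
    have := card_pos.mpr ⟨∅, hmem⟩
    exact_mod_cast this
  | succ k ihk =>
    intro N
    induction N with
    | zero =>
      intro n 𝒢 hN hunif α hα hcard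
      exfalso
      have hone : (1 : ℝ) ≤ gchoose α (k + 1 + 1) :=
        one_le_gchoose (k + 1 + 1) (by push_cast; push_cast at hα; linarith)
      have h0 : 𝒢.card = 0 := by omega
      rw [h0] at hcard
      push_cast at hcard
      linarith
    | succ N ihN =>
      intro n 𝒢 hcardN hunif α hα hcard
      push_cast at hα
      -- 𝒢 is nonempty
      have hone : (1 : ℝ) ≤ gchoose α (k + 1 + 1) :=
        one_le_gchoose (k + 1 + 1) (by push_cast; linarith)
      have hGpos : 0 < 𝒢.card := by
        by_contra h
        push_neg at h
        have : 𝒢.card = 0 := by omega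
        rw [this] at hcard
        push_cast at hcard
        linarith
      have hn : 0 < n := by
        obtain ⟨G, hG⟩ := card_pos.mp hGpos
        have : G.Nonempty := card_pos.mp (by rw [hunif G hG]; omega)
        obtain ⟨a, _⟩ := this
        exact a.pos
      haveI : NeZero n := ⟨hn.ne'⟩
      -- replace 𝒢 by an initial segment 𝒞 of the same size
      have hsub : 𝒢 ⊆ (Finset.univ : Finset (Fin n)).powersetCard (k + 1 + 1) := fun G hG =>
        Finset.mem_powersetCard_univ.mpr (hunif G hG)
      obtain ⟨𝒞, hinit, hccard⟩ := exists_initSeg n (k + 1 + 1) 𝒢.card (card_le_card hsub)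
      have hkk : (∂ 𝒞).card ≤ (∂ 𝒢).card := by
        have h := Finset.kruskal_katona (𝒜 := 𝒢) (𝒞 := 𝒞) (fun G hG => hunif G hG)
          hccard.le hinit
        convert h using 3 <;> exact Subsingleton.elim _ _
      have hcast : ((∂ 𝒞).card : ℝ) ≤ ((∂ 𝒢).card : ℝ) := by exact_mod_cast hkk
      suffices hsuff : gchoose α (k + 1) ≤ ((∂ 𝒞).card : ℝ) by linarith
      -- split 𝒞 according to membership of 0
      classical
      set F := 𝒞.filter (fun A => (0 : Fin n) ∈ A) with hF
      set C0 := F.image (fun A => A.erase (0 : Fin n)) with hC0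
      set C1 := 𝒞.filter (fun A => (0 : Fin n) ∉ A) with hC1
      have hsized : ∀ A ∈ 𝒞, A.card = k + 1 + 1 := fun A hA => hinit.1 hA
      have hC0card : C0.card = F.card := by
        apply card_image_of_injOn
        intro A hA B hB h
        rw [hF, coe_filter, Set.mem_setOf_eq] at hA hB
        dsimp only at h
        rw [← insert_erase hA.2, h, insert_erase hB.2]
      have hsplit : F.card + C1.card = 𝒞.card := card_filter_add_card_filter_not _
      have hC0sized : ∀ S ∈ C0, S.card = k + 1 := by
        intro S hS
        obtain ⟨A, hA, rfl⟩ := mem_image.mp hS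
        rw [hF, mem_filter] at hA
        rw [card_erase_of_mem hA.2, hsized A hA.1]
        omega

      have hC1sized : ∀ A ∈ C1, A.card = k + 1 + 1 := by
        intro A hA
        rw [hC1, mem_filter] at hA
        exact hsized A hA.1
      -- shift property
      have hshift : ∀ A ∈ 𝒞, (0 : Fin n) ∉ A → ∀ j ∈ A, insert 0 (A.erase j) ∈ 𝒞 :=
        initSeg_shift hinit
      -- shadow of C1 is inside C0
      have hsub1 : ∂ C1 ⊆ C0 := by
        intro T hT
        rw [mem_shadow_iff] at hT
        obtain ⟨A, hA, a, haA, rfl⟩ := hT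
        rw [hC1, mem_filter] at hA
        have hin := hshift A hA.1 hA.2 a haA
        rw [hC0, mem_image]
        refine ⟨insert 0 (A.erase a), mem_filter.mpr ⟨hin, mem_insert_self _ _⟩, ?_⟩
        exact erase_insert (fun h => hA.2 (mem_of_mem_erase h))
      -- C0 is nonempty
      have h𝒞ne : 𝒞.Nonempty := card_pos.mp (by omega)
      have hC0ne : C0.Nonempty := by
        obtain ⟨A, hA⟩ := h𝒞ne
        by_cases h0 : (0 : Fin n) ∈ A
        · exact ⟨A.erase 0, mem_image_of_mem _ (mem_filter.mpr ⟨hA, h0⟩)⟩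
        · have : A.Nonempty := card_pos.mp (by rw [hsized A hA]; omega)
          obtain ⟨j, hj⟩ := this
          have hin := hshift A hA h0 j hj
          exact ⟨(insert 0 (A.erase j)).erase 0,
            mem_image_of_mem _ (mem_filter.mpr ⟨hin, mem_insert_self _ _⟩)⟩
      -- key claim : C0 is large
      have hclaim : gchoose (α - 1) (k + 1) ≤ (C0.card : ℝ) := by
        by_contra hcon
        push_neg at hcon
        have hsplit' : (F.card : ℝ) + (C1.card : ℝ) = (𝒢.card : ℝ) := by
          rw [← hccard]; exact_mod_cast hsplit
        have hC0F : (C0.card : ℝ) = (F.card : ℝ) := by exact_mod_cast hC0card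
        have hpas := gchoose_pascal α (k + 1)
        have hC1big : gchoose (α - 1) (k + 1 + 1) < (C1.card : ℝ) := by linarith
        have hC1le : C1.card ≤ N := by
          have hF1 : 1 ≤ F.card := by
            rw [← hC0card]
            exact card_pos.mpr hC0ne
          omega
        have hDC1 : ((∂ C1).card : ℝ) ≤ (C0.card : ℝ) := by
          exact_mod_cast card_le_card hsub1
        by_cases hcase : (k : ℝ) + 1 + 1 ≤ α - 1
        · have happ := ihN n C1 hC1le hC1sized (α - 1) (by push_cast; linarith) hC1big.le
          linarith
        · push_neg at hcase
          have hge0 : (0 : ℝ) ≤ gchoose (α - 1) (k + 1 + 1) := by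
            apply gchoose_nonneg
            push_cast
            linarith
          have h1le : 1 ≤ C1.card := by
            by_contra h
            push_neg at h
            have : C1.card = 0 := by omega
            rw [this] at hC1big
            push_cast at hC1big
            linarith
          have hself : gchoose ((k : ℝ) + 1 + 1) (k + 1 + 1) = 1 := by
            have := gchoose_self (k + 1 + 1); push_cast at this; exact this
          have happ := ihN n C1 hC1le hC1sized ((k : ℝ) + 1 + 1) (by push_cast; linarith)
            (by rw [hself]; exact_mod_cast h1le)
          have hss : gchoose ((k : ℝ) + 1 + 1) (k + 1) = (k : ℝ) + 1 + 1 := by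
            have := gchoose_succ_self (k + 1); push_cast at this
            convert this using 2 <;> push_cast <;> ring
          rw [hss] at happ
          have hmono : gchoose (α - 1) (k + 1) < gchoose ((k : ℝ) + 1 + 1) (k + 1) := by
            apply gchoose_lt_gchoose (by push_cast; linarith) (by linarith) (by omega)
          rw [hss] at hmono
          linarith
      -- apply induction at level k to C0
      have h7 := ihk C0.card n C0 le_rfl hC0sized (α - 1) (by linarith) hclaim
      -- counting: #∂𝒞 ≥ #C0 + #∂C0
      have h0notin : ∀ T ∈ ∂ C0, (0 : Fin n) ∉ T := by
        intro T hT
        rw [mem_shadow_iff] at hT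
        obtain ⟨S, hS, a, ha, rfl⟩ := hT
        obtain ⟨A, _, rfl⟩ := mem_image.mp hS
        exact fun h => notMem_erase (0 : Fin n) A (mem_of_mem_erase h)
      have hdisj : Disjoint C0 ((∂ C0).image (insert (0 : Fin n))) := by
        rw [disjoint_left]
        intro S hS hS'
        obtain ⟨A, _, rfl⟩ := mem_image.mp hS
        obtain ⟨T, _, h⟩ := mem_image.mp hS'
        exact notMem_erase (0 : Fin n) A (h ▸ mem_insert_self 0 T)
      have himgcard : ((∂ C0).image (insert (0 : Fin n))).card = (∂ C0).card := by
        apply card_image_of_injOn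
        intro T hT T' hT' h
        have := congrArg (fun s => Finset.erase s (0 : Fin n)) h
        simpa [erase_insert (h0notin _ hT), erase_insert (h0notin _ hT')] using this
      have hunion : C0 ∪ (∂ C0).image (insert (0 : Fin n)) ⊆ ∂ 𝒞 := by
        apply union_subset
        · intro S hS
          obtain ⟨A, hA, rfl⟩ := mem_image.mp hS
          rw [hF, mem_filter] at hA
          exact mem_shadow_iff.mpr ⟨A, hA.1, 0, hA.2, rfl⟩
        · intro S hS
          obtain ⟨T, hT, rfl⟩ := mem_image.mp hS
          rw [mem_shadow_iff] at hT
          obtain ⟨S', hS', a, ha, rfl⟩ := hT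
          obtain ⟨A, hA, rfl⟩ := mem_image.mp hS'
          rw [hF, mem_filter] at hA
          have ha0 : a ≠ 0 := fun h => notMem_erase (0 : Fin n) A (h ▸ ha)
          have haA : a ∈ A := mem_of_mem_erase ha
          have heq : insert (0 : Fin n) ((A.erase 0).erase a) = A.erase a := by
            rw [erase_right_comm, insert_erase (mem_erase.mpr ⟨Ne.symm ha0, hA.2⟩)]
          rw [heq]
          exact mem_shadow_iff.mpr ⟨A, hA.1, a, haA, rfl⟩
      have hcount : C0.card + (∂ C0).card ≤ (∂ 𝒞).card := by
        have := card_le_card hunion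
        rwa [card_union_of_disjoint hdisj, himgcard] at this
      have hcountR : (C0.card : ℝ) + ((∂ C0).card : ℝ) ≤ ((∂ 𝒞).card : ℝ) := by
        exact_mod_cast hcount
      rw [gchoose_pascal]
      linarith

theorem stmt_12 (n d : ℕ) (𝒢 : Finset (Finset (Fin n)))
    (hunif : ∀ G ∈ 𝒢, G.card = d + 1)
    (α : ℝ) (hα : (d : ℝ) + 1 ≤ α) (hcard : (𝒢.card : ℝ) = gchoose α (d + 1)) :
    ((((Finset.univ : Finset (Fin n)).powersetCard d).filter
        (fun T => ∃ G ∈ 𝒢, T ⊆ G)).card : ℝ) ≥ gchoose α d ∧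
    gchoose α d = (𝒢.card : ℝ) * ((d : ℝ) + 1) / (α - d) := by
  classical
  constructor
  · have hset : (((Finset.univ : Finset (Fin n)).powersetCard d).filter
        (fun T => ∃ G ∈ 𝒢, T ⊆ G)) = ∂ 𝒢 := by
      ext T
      rw [mem_filter, Finset.mem_powersetCard_univ, mem_shadow_iff]
      constructor
      · rintro ⟨hTd, G, hG, hTG⟩
        have hGcard := hunif G hG
        have hne : (G \ T).Nonempty := by
          rw [← card_pos, card_sdiff_of_subset hTG, hGcard, hTd]; omega
        obtain ⟨a, ha⟩ := hne
        rw [mem_sdiff] at ha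
        refine ⟨G, hG, a, ha.1, ?_⟩
        have hsub : T ⊆ G.erase a := fun x hx =>
          mem_erase.mpr ⟨fun h => ha.2 (h ▸ hx), hTG hx⟩
        have hle : (G.erase a).card ≤ T.card := by
          rw [card_erase_of_mem ha.1, hGcard, hTd]
          omega
        exact (eq_of_subset_of_card_le hsub hle).symm
      · rintro ⟨G, hG, a, haG, rfl⟩
        refine ⟨?_, G, hG, erase_subset a G⟩
        rw [card_erase_of_mem haG, hunif G hG]
        omega
    rw [ge_iff_le, hset]
    exact lovasz_core d 𝒢.card n 𝒢 le_rfl hunif α hα hcard.ge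
  · have h1 : α - (d : ℝ) ≠ 0 := by
      have : (1 : ℝ) ≤ α - d := by linarith
      linarith
    have h2 : ((d : ℝ) + 1) ≠ 0 := by positivity
    rw [hcard, gchoose_succ]
    field_simp
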